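/- For 0 ≤ ρ₁ < ρ₂ < 1 and L > 0, the asymmetric sensitivity property holds for the Hellinger contrast in the following form: d_H(ρ₁, ρ₁ + δ | L) with ρ₁ + δ < 1 is strictly increasing in δ ∈ [0, 1−ρ₁), and its one-sided limit as δ → (1−ρ₁)⁻ equals 1, whereas d_H(ρ₁, ρ₁ − δ | L) for δ ∈ [0, ρ₁] is bounded above by 1 − [4√(1-ρ₁²)/(4−ρ₁²)]^L < 1. -/

import Mathlib

open Real Set Filter

noncomputable def dH (L r1 r2 : ℝ) : ℝ :=
  1 - (4 * Real.sqrt ((1 - r1 ^ 2) * (1 - r2 ^ 2)) / (4 - (r1 + r2) ^ 2)) ^ L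

namespace Aux18

noncomputable def phi (r1 y : ℝ) : ℝ :=
  4 * Real.sqrt ((1 - r1 ^ 2) * (1 - y ^ 2)) / (4 - (r1 + y) ^ 2)

lemma den_pos {r1 y : ℝ} (hr0 : 0 ≤ r1) (hr1 : r1 < 1) (hy0 : 0 ≤ y) (hy1 : y ≤ 1) :
    0 < 4 - (r1 + y) ^ 2 := by nlinarith

lemma phi_pos {r1 y : ℝ} (hr0 : 0 ≤ r1) (hr1 : r1 < 1) (hy0 : 0 ≤ y) (hy1 : y < 1) :
    0 < phi r1 y := by
  have hA : 0 < (1 - r1 ^ 2) * (1 - y ^ 2) :=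
    mul_pos (by nlinarith) (by nlinarith)
  have hS := Real.sqrt_pos.2 hA
  have hden := den_pos hr0 hr1 hy0 hy1.le
  exact div_pos (by positivity) hden

lemma hasDeriv (r1 : ℝ) (hr0 : 0 ≤ r1) (hr1 : r1 < 1) {x : ℝ} (hx0 : 0 ≤ x) (hx1 : x < 1) :
    HasDerivAt (phi r1)
      ((4 * ((1 - r1 ^ 2) * -(2 * x) / (2 * Real.sqrt ((1 - r1 ^ 2) * (1 - x ^ 2)))) *
          (4 - (r1 + x) ^ 2) -
        4 * Real.sqrt ((1 - r1 ^ 2) * (1 - x ^ 2)) * -(2 * (r1 + x))) /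
        (4 - (r1 + x) ^ 2) ^ 2) x := by
  unfold phi
  have hupos : 0 < (1 - r1 ^ 2) * (1 - x ^ 2) :=
    mul_pos (by nlinarith) (by nlinarith)
  have hu : HasDerivAt (fun y : ℝ => (1 - r1 ^ 2) * (1 - y ^ 2)) ((1 - r1 ^ 2) * -(2 * x)) x := by
    have h2 : HasDerivAt (fun y : ℝ => 1 - y ^ 2) (-(2 * x)) x := by
      simpa using (hasDerivAt_pow 2 x).const_sub 1
    exact h2.const_mul _
  have hs := (hu.sqrt (ne_of_gt hupos)).const_mul (4:ℝ)
  have hden : HasDerivAt (fun y : ℝ => 4 - (r1 + y) ^ 2) (-(2 * (r1 + x))) x := by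
    have h1 : HasDerivAt (fun y : ℝ => (r1 + y) ^ 2) (2 * (r1 + x)) x := by
      simpa using (((hasDerivAt_id x).const_add r1).fun_pow 2)
    simpa using h1.const_sub 4
  have hdne : (4 - (r1 + x) ^ 2) ≠ 0 := ne_of_gt (den_pos hr0 hr1 hx0 hx1.le)
  have h := hs.fun_div hden hdne
  convert h using 1

lemma num_sign (r1 : ℝ) (hr0 : 0 ≤ r1) (hr1 : r1 < 1) {x : ℝ} (hx0 : 0 ≤ x) (hx1 : x < 1) :
    (4 * ((1 - r1 ^ 2) * -(2 * x) / (2 * Real.sqrt ((1 - r1 ^ 2) * (1 - x ^ 2)))) *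
          (4 - (r1 + x) ^ 2) -
        4 * Real.sqrt ((1 - r1 ^ 2) * (1 - x ^ 2)) * -(2 * (r1 + x))) *
        (2 * Real.sqrt ((1 - r1 ^ 2) * (1 - x ^ 2)))
      = 8 * (1 - r1 ^ 2) * ((r1 - x) * (x * (r1 + x) + 2)) := by
  have hupos : 0 < (1 - r1 ^ 2) * (1 - x ^ 2) :=
    mul_pos (by nlinarith) (by nlinarith)
  set S := Real.sqrt ((1 - r1 ^ 2) * (1 - x ^ 2)) with hSdef
  have hS : 0 < S := Real.sqrt_pos.2 hupos
  have hS2 : S ^ 2 = (1 - r1 ^ 2) * (1 - x ^ 2) := Real.sq_sqrt hupos.le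
  have expand : (4 * ((1 - r1 ^ 2) * -(2 * x) / (2 * S)) * (4 - (r1 + x) ^ 2) -
      4 * S * -(2 * (r1 + x))) * (2 * S)
      = 4 * ((1 - r1 ^ 2) * -(2 * x)) * (4 - (r1 + x) ^ 2) + 16 * (r1 + x) * S ^ 2 := by
    field_simp
    ring
  rw [expand, hS2]
  ring

lemma deriv_neg (r1 : ℝ) (hr0 : 0 ≤ r1) (hr1 : r1 < 1) {x : ℝ} (hx : r1 < x) (hx1 : x < 1) :
    (4 * ((1 - r1 ^ 2) * -(2 * x) / (2 * Real.sqrt ((1 - r1 ^ 2) * (1 - x ^ 2)))) *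
          (4 - (r1 + x) ^ 2) -
        4 * Real.sqrt ((1 - r1 ^ 2) * (1 - x ^ 2)) * -(2 * (r1 + x))) /
        (4 - (r1 + x) ^ 2) ^ 2 < 0 := by
  have hx0 : 0 ≤ x := le_trans hr0 hx.le
  have hupos : 0 < (1 - r1 ^ 2) * (1 - x ^ 2) :=
    mul_pos (by nlinarith) (by nlinarith)
  have hS : 0 < Real.sqrt ((1 - r1 ^ 2) * (1 - x ^ 2)) := Real.sqrt_pos.2 hupos
  have hden := den_pos hr0 hr1 hx0 hx1.le
  apply div_neg_of_neg_of_pos _ (by positivity)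
  have hkey := num_sign r1 hr0 hr1 hx0 hx1
  have hrneg : 8 * (1 - r1 ^ 2) * ((r1 - x) * (x * (r1 + x) + 2)) < 0 := by
    have h1 : 0 < 1 - r1 ^ 2 := by nlinarith
    have h2 : x * (r1 + x) + 2 > 0 := by
      nlinarith [mul_nonneg hx0 (by linarith : (0:ℝ) ≤ r1 + x)]
    have h3 : r1 - x < 0 := by linarith
    nlinarith [mul_pos h1 (mul_pos (by linarith : (0:ℝ) < x - r1) h2)]
  by_contra hc
  push_neg at hc
  nlinarith [mul_nonneg hc (by linarith : (0:ℝ) ≤ 2 * Real.sqrt ((1 - r1 ^ 2) * (1 - x ^ 2)))]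

lemma deriv_nonneg (r1 : ℝ) (hr0 : 0 ≤ r1) (hr1 : r1 < 1) {x : ℝ} (hx0 : 0 ≤ x) (hx : x ≤ r1) :
    0 ≤ (4 * ((1 - r1 ^ 2) * -(2 * x) / (2 * Real.sqrt ((1 - r1 ^ 2) * (1 - x ^ 2)))) *
          (4 - (r1 + x) ^ 2) -
        4 * Real.sqrt ((1 - r1 ^ 2) * (1 - x ^ 2)) * -(2 * (r1 + x))) /
        (4 - (r1 + x) ^ 2) ^ 2 := by
  have hx1 : x < 1 := lt_of_le_of_lt hx hr1
  have hupos : 0 < (1 - r1 ^ 2) * (1 - x ^ 2) :=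
    mul_pos (by nlinarith) (by nlinarith)
  have hS : 0 < Real.sqrt ((1 - r1 ^ 2) * (1 - x ^ 2)) := Real.sqrt_pos.2 hupos
  have hden := den_pos hr0 hr1 hx0 hx1.le
  apply div_nonneg _ (by positivity)
  have hkey := num_sign r1 hr0 hr1 hx0 hx1
  have hrpos : 0 ≤ 8 * (1 - r1 ^ 2) * ((r1 - x) * (x * (r1 + x) + 2)) := by
    have h1 : 0 < 1 - r1 ^ 2 := by nlinarith
    have h2 : x * (r1 + x) + 2 > 0 := by
      nlinarith [mul_nonneg hx0 (by linarith : (0:ℝ) ≤ r1 + x)]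
    exact mul_nonneg (by nlinarith) (mul_nonneg (by linarith) (by linarith))
  by_contra hc
  push_neg at hc
  nlinarith [mul_neg_of_neg_of_pos hc (by linarith : (0:ℝ) < 2 * Real.sqrt ((1 - r1 ^ 2) * (1 - x ^ 2)))]

lemma contOn (r1 : ℝ) (hr0 : 0 ≤ r1) (hr1 : r1 < 1) {s : Set ℝ} (hs : s ⊆ Ico 0 1) :
    ContinuousOn (phi r1) s := by
  unfold phi
  apply ContinuousOn.div (by fun_prop) (by fun_prop)
  intro y hy
  exact ne_of_gt (den_pos hr0 hr1 (hs hy).1 (hs hy).2.le)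

lemma strictAnti (r1 : ℝ) (hr0 : 0 ≤ r1) (hr1 : r1 < 1) :
    StrictAntiOn (phi r1) (Ico r1 1) := by
  apply strictAntiOn_of_deriv_neg (convex_Ico _ _)
    (contOn r1 hr0 hr1 (fun y hy => ⟨le_trans hr0 hy.1, hy.2⟩))
  intro x hx
  rw [interior_Ico] at hx
  rw [(hasDeriv r1 hr0 hr1 (le_trans hr0 hx.1.le) hx.2).deriv]
  exact deriv_neg r1 hr0 hr1 hx.1 hx.2

lemma mono (r1 : ℝ) (hr0 : 0 ≤ r1) (hr1 : r1 < 1) :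
    MonotoneOn (phi r1) (Icc 0 r1) := by
  apply monotoneOn_of_deriv_nonneg (convex_Icc _ _)
    (contOn r1 hr0 hr1 (fun y hy => ⟨hy.1, lt_of_le_of_lt hy.2 hr1⟩))
  · intro x hx
    rw [interior_Icc] at hx
    exact (hasDeriv r1 hr0 hr1 hx.1.le (lt_of_lt_of_le hx.2 hr1.le)).differentiableAt.differentiableWithinAt
  · intro x hx
    rw [interior_Icc] at hx
    rw [(hasDeriv r1 hr0 hr1 hx.1.le (lt_of_lt_of_le hx.2 hr1.le)).deriv]
    exact deriv_nonneg r1 hr0 hr1 hx.1.le hx.2.le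

end Aux18

open Aux18 in
theorem stmt_18 (L r1 : ℝ) (hL : 0 < L) (h1 : r1 ∈ Set.Ico (0 : ℝ) 1) :
    StrictMonoOn (fun d => dH L r1 (r1 + d)) (Set.Ico 0 (1 - r1)) ∧
      Filter.Tendsto (fun d => dH L r1 (r1 + d)) (nhdsWithin (1 - r1) (Set.Iio (1 - r1)))
        (nhds 1) ∧
      ∀ d ∈ Set.Icc 0 r1,
        dH L r1 (r1 - d) ≤ 1 - (4 * Real.sqrt (1 - r1 ^ 2) / (4 - r1 ^ 2)) ^ L ∧
          1 - (4 * Real.sqrt (1 - r1 ^ 2) / (4 - r1 ^ 2)) ^ L < 1 := by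
  obtain ⟨hr0, hr1⟩ := h1
  refine ⟨?_, ?_, ?_⟩
  · intro a ha b hb hab
    have hpa : r1 + a ∈ Ico r1 1 := ⟨by linarith [ha.1], by linarith [ha.2]⟩
    have hpb : r1 + b ∈ Ico r1 1 := ⟨by linarith [hb.1], by linarith [hb.2]⟩
    have hlt : phi r1 (r1 + b) < phi r1 (r1 + a) :=
      strictAnti r1 hr0 hr1 hpa hpb (by linarith)
    have hposb : 0 < phi r1 (r1 + b) := phi_pos hr0 hr1 (le_trans hr0 hpb.1) hpb.2
    have hpow := Real.rpow_lt_rpow hposb.le hlt hL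
    show 1 - phi r1 (r1 + a) ^ L < 1 - phi r1 (r1 + b) ^ L
    linarith
  · have hg : ContinuousAt (fun d : ℝ => phi r1 (r1 + d)) (1 - r1) := by
      unfold phi
      apply ContinuousAt.div (by fun_prop) (by fun_prop)
      have : r1 + (r1 + (1 - r1)) = r1 + 1 := by ring
      rw [this]
      nlinarith
    have hval : phi r1 (r1 + (1 - r1)) = 0 := by
      unfold phi
      have h0 : 1 - (r1 + (1 - r1)) ^ 2 = 0 := by ring
      rw [h0, mul_zero, Real.sqrt_zero, mul_zero, zero_div]
    have hg0 : Tendsto (fun d : ℝ => phi r1 (r1 + d)) (nhdsWithin (1 - r1) (Iio (1 - r1)))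
        (nhds 0) := by
      have := hg.tendsto
      rw [hval] at this
      exact this.mono_left nhdsWithin_le_nhds
    have hrpow : Tendsto (fun t : ℝ => t ^ L) (nhds 0) (nhds 0) := by
      have := (Real.continuousAt_rpow_const 0 L (Or.inr hL.le)).tendsto
      simpa [Real.zero_rpow hL.ne'] using this
    have hcomp := hrpow.comp hg0
    have hfinal := (tendsto_const_nhds (x := (1:ℝ))).sub hcomp
    simpa [Function.comp, dH, phi] using hfinal
  · intro d hd
    have hx : r1 - d ∈ Icc 0 r1 := ⟨by linarith [hd.2], by linarith [hd.1]⟩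
    have hle : phi r1 0 ≤ phi r1 (r1 - d) :=
      mono r1 hr0 hr1 ⟨le_refl 0, hr0⟩ hx (by linarith [hd.1, hd.2])
    have hphi0 : 4 * Real.sqrt (1 - r1 ^ 2) / (4 - r1 ^ 2) = phi r1 0 := by
      simp [phi]
    have hp0 : 0 < phi r1 0 := phi_pos hr0 hr1 le_rfl one_pos
    constructor
    · have hpow := Real.rpow_le_rpow hp0.le hle hL.le
      rw [hphi0]
      show 1 - phi r1 (r1 - d) ^ L ≤ 1 - phi r1 0 ^ L
      linarith
    · rw [hphi0]
      have := Real.rpow_pos_of_pos hp0 L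
      linarith
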